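/- Let ψ : ℝ^M → ℂ^D be a differentiable family of unit vectors, fix θ* ∈ ℝ^M, let 0 < t ≤ 1, and set K = (t − 1)·ψ(θ*)ψ(θ*)† + I, F = K†K, p(θ) = ⟨ψ(θ), F ψ(θ)⟩, ψ^{ps}(θ) = K ψ(θ)/√(p(θ)). Define the Uhlmann curvature of a unit-vector family φ by 𝓙_{ij}(θ | φ) = 4 Im[⟨∂_iφ(θ), ∂_jφ(θ)⟩ − ⟨∂_iφ(θ), φ(θ)⟩⟨φ(θ), ∂_jφ(θ)⟩]. Then for all i, j: 𝓙_{ij}(θ* | ψ^{ps}) = (1/t²) · 𝓙_{ij}(θ* | ψ). -/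

import Mathlib

noncomputable section

open Matrix

/-- Standard Hermitian inner product on `ℂ^D`, conjugate-linear in the first argument. -/
def dotc {D : ℕ} (x y : Fin D → ℂ) : ℂ := ∑ d, starRingEnd ℂ (x d) * y d

/-- Partial derivative of a parametrized family with respect to the `i`-th parameter. -/
def pder {M D : ℕ} (i : Fin M) (φ : (Fin M → ℝ) → (Fin D → ℂ)) (θ : Fin M → ℝ) :
    Fin D → ℂ :=
  fderiv ℝ φ θ (Pi.single i 1)

/-- Mean Uhlmann curvature entry
`𝓙_{ij}(θ|φ) = 4 Im[⟨∂_iφ,∂_jφ⟩ − ⟨∂_iφ,φ⟩⟨φ,∂_jφ⟩]`. -/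
def uhlmann {M D : ℕ} (φ : (Fin M → ℝ) → (Fin D → ℂ)) (θ : Fin M → ℝ) (i j : Fin M) : ℝ :=
  4 * (dotc (pder i φ θ) (pder j φ θ) -
        dotc (pder i φ θ) (φ θ) * dotc (φ θ) (pder j φ θ)).im

lemma dotc_add_left {D : ℕ} (x y z : Fin D → ℂ) : dotc (x + y) z = dotc x z + dotc y z := by
  simp [dotc, add_mul, Finset.sum_add_distrib]

lemma dotc_add_right {D : ℕ} (x y z : Fin D → ℂ) : dotc x (y + z) = dotc x y + dotc x z := by
  simp [dotc, mul_add, Finset.sum_add_distrib]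

lemma dotc_smul_left {D : ℕ} (c : ℂ) (x y : Fin D → ℂ) :
    dotc (c • x) y = starRingEnd ℂ c * dotc x y := by
  simp only [dotc, Pi.smul_apply, smul_eq_mul, RingHom.map_mul, Finset.mul_sum]
  apply Finset.sum_congr rfl; intros; ring

lemma dotc_smul_right {D : ℕ} (c : ℂ) (x y : Fin D → ℂ) :
    dotc x (c • y) = c * dotc x y := by
  simp only [dotc, Pi.smul_apply, smul_eq_mul, Finset.mul_sum]
  apply Finset.sum_congr rfl; intros; ring

lemma dotc_rsmul_left {D : ℕ} (r : ℝ) (x y : Fin D → ℂ) :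
    dotc (r • x) y = (r : ℂ) * dotc x y := by
  have : (r : ℝ) • x = (r : ℂ) • x := by ext d; simp [Complex.real_smul]
  rw [this, dotc_smul_left]; simp

lemma dotc_rsmul_right {D : ℕ} (r : ℝ) (x y : Fin D → ℂ) :
    dotc x (r • y) = (r : ℂ) * dotc x y := by
  have : (r : ℝ) • y = (r : ℂ) • y := by ext d; simp [Complex.real_smul]
  rw [this, dotc_smul_right]

lemma star_dotc {D : ℕ} (x y : Fin D → ℂ) : starRingEnd ℂ (dotc x y) = dotc y x := by
  simp [dotc, map_sum, mul_comm]

lemma dotc_conjT {D : ℕ} (A : Matrix (Fin D) (Fin D) ℂ) (x z : Fin D → ℂ) :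
    dotc x (Aᴴ.mulVec z) = dotc (A.mulVec x) z := by
  simp only [dotc, Matrix.mulVec, Matrix.conjTranspose_apply, dotProduct, map_sum, _root_.map_mul,
    Finset.mul_sum, Finset.sum_mul]
  rw [Finset.sum_comm]
  apply Finset.sum_congr rfl; intro k _; apply Finset.sum_congr rfl; intro d _
  simp [mul_comm, mul_left_comm]

lemma vecMulVec_action {D : ℕ} (u x : Fin D → ℂ) :
    (vecMulVec u (star u)).mulVec x = dotc u x • u := by
  ext d
  simp only [Matrix.mulVec, Matrix.vecMulVec_apply, dotProduct, Pi.star_apply, Pi.smul_apply,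
    dotc, smul_eq_mul, Finset.sum_mul]
  apply Finset.sum_congr rfl; intros; simp [Complex.star_def]; ring

lemma pder_clm {M D : ℕ} (L : (Fin D → ℂ) →L[ℝ] (Fin D → ℂ))
    (ψ : (Fin M → ℝ) → (Fin D → ℂ)) (hψ : Differentiable ℝ ψ) (i : Fin M) (θ : Fin M → ℝ) :
    pder i (fun θ' => L (ψ θ')) θ = L (pder i ψ θ) := by
  unfold pder
  have h : HasFDerivAt (fun θ' => L (ψ θ')) (L.comp (fderiv ℝ ψ θ)) θ :=
    L.hasFDerivAt.comp θ (hψ θ).hasFDerivAt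
  rw [h.fderiv]
  rfl

lemma diff_dotc_self {M D : ℕ} (ψ : (Fin M → ℝ) → (Fin D → ℂ)) (hψ : Differentiable ℝ ψ)
    (F : Matrix (Fin D) (Fin D) ℂ) :
    Differentiable ℝ (fun θ => (dotc (ψ θ) (F.mulVec (ψ θ))).re) := by
  apply Differentiable.comp (Complex.reCLM.differentiable)
  unfold dotc
  apply Differentiable.fun_sum
  intro d _
  apply Differentiable.mul
  · exact ((differentiable_pi.1 hψ) d).star
  · simp only [Matrix.mulVec, dotProduct]
    apply Differentiable.fun_sum
    intro k _
    exact ((differentiable_pi.1 hψ) k).const_mul _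

/-- The Uhlmann curvature transforms under postselection with
`K = (t−1)|ψ(θ*)⟩⟨ψ(θ*)| + I` exactly like the QFIM:
`𝓙_{ij}(θ*|ψ^{ps}) = (1/t²) 𝓙_{ij}(θ*|ψ)`. -/
theorem distilled_uhlmann_curvature_amplification
    (M D : ℕ) (ψ : (Fin M → ℝ) → (Fin D → ℂ))
    (hψ : Differentiable ℝ ψ)
    (hunit : ∀ θ, dotc (ψ θ) (ψ θ) = 1)
    (θstar : Fin M → ℝ) (t : ℝ) (ht0 : 0 < t) (ht1 : t ≤ 1)
    (P : Matrix (Fin D) (Fin D) ℂ)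
    (hP : P = vecMulVec (ψ θstar) (star (ψ θstar)))
    (K : Matrix (Fin D) (Fin D) ℂ)
    (hK : K = ((t : ℂ) - 1) • P + 1)
    (F : Matrix (Fin D) (Fin D) ℂ) (hF : F = Kᴴ * K)
    (p : (Fin M → ℝ) → ℝ)
    (hp : ∀ θ, p θ = (dotc (ψ θ) (F.mulVec (ψ θ))).re)
    (ψps : (Fin M → ℝ) → (Fin D → ℂ))
    (hψps : ∀ θ', ψps θ' = (Real.sqrt (p θ'))⁻¹ • K.mulVec (ψ θ')) :
    ∀ i j, uhlmann ψps θstar i j = (1 / t ^ 2) * uhlmann ψ θstar i j := by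
  have htne : (t : ℂ) ≠ 0 := by exact_mod_cast ht0.ne'
  set u := ψ θstar with hu
  have huu : dotc u u = 1 := hunit θstar
  -- action of K
  have hKv : ∀ x, K.mulVec x = (((t:ℂ) - 1) * dotc u x) • u + x := by
    intro x
    rw [hK, hP, Matrix.add_mulVec, Matrix.smul_mulVec, Matrix.one_mulVec,
      vecMulVec_action, smul_smul]
  -- dotc of K-images
  have hdKK : ∀ x y, dotc (K.mulVec x) (K.mulVec y)
      = ((t:ℂ)^2 - 1) * (dotc x u * dotc u y) + dotc x y := by
    intro x y
    rw [hKv x, hKv y]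
    simp only [dotc_add_left, dotc_add_right, dotc_smul_left, dotc_smul_right,
      RingHom.map_mul, _root_.map_sub, _root_.map_one, Complex.conj_ofReal, star_dotc, huu]
    ring
  have hFv : ∀ x y, dotc x (F.mulVec y) = dotc (K.mulVec x) (K.mulVec y) := by
    intro x y; rw [hF, ← Matrix.mulVec_mulVec, dotc_conjT]
  have hpt : p θstar = t ^ 2 := by
    rw [hp, hFv, hdKK, ← hu, huu]
    simp only [mul_one, sub_add_cancel]
    rw [show ((t:ℂ)^2) = ((t^2 : ℝ) : ℂ) by push_cast; ring, Complex.ofReal_re]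
  -- differentiability of p
  have hpd : Differentiable ℝ p := by
    have h : p = fun θ => (dotc (ψ θ) (F.mulVec (ψ θ))).re := funext hp
    rw [h]; exact diff_dotc_self ψ hψ F
  set f : (Fin M → ℝ) → ℝ := fun θ => (Real.sqrt (p θ))⁻¹ with hfdef
  have hsq : Real.sqrt (p θstar) = t := by rw [hpt]; exact Real.sqrt_sq ht0.le
  have hfθ : f θstar = t⁻¹ := by rw [hfdef]; simp [hsq]
  have hfdiff : DifferentiableAt ℝ f θstar := by
    apply DifferentiableAt.inv
    · exact (hpd θstar).sqrt (by rw [hpt]; positivity)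
    · rw [hsq]; exact ht0.ne'
  -- K.mulVec as a ℝ-CLM
  set L : (Fin D → ℂ) →L[ℝ] (Fin D → ℂ) :=
    LinearMap.toContinuousLinearMap ((Matrix.mulVecLin K).restrictScalars ℝ) with hLdef
  have hL : ∀ x, L x = K.mulVec x := fun x => rfl
  have hgdiff : Differentiable ℝ (fun θ => L (ψ θ)) := L.differentiable.comp hψ
  have hpsieq : ψps = fun θ => f θ • L (ψ θ) := by
    funext θ'; rw [hψps θ', hL]
  have hw : ψps θstar = (t⁻¹ : ℝ) • K.mulVec u := by
    rw [hψps θstar, hsq, ← hu]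
  have hpderps : ∀ k : Fin M, pder k ψps θstar
      = (t⁻¹ : ℝ) • K.mulVec (pder k ψ θstar)
        + (fderiv ℝ f θstar (Pi.single k 1)) • K.mulVec u := by
    intro k
    have h1 : pder k (fun θ => L (ψ θ)) θstar = L (pder k ψ θstar) :=
      pder_clm L ψ hψ k θstar
    unfold pder at h1 ⊢
    rw [hpsieq, fderiv_fun_smul hfdiff (hgdiff θstar)]
    simp only [ContinuousLinearMap.add_apply, ContinuousLinearMap.coe_smul', Pi.smul_apply,
      ContinuousLinearMap.smulRight_apply]
    rw [h1, hfθ]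
    simp only [hL]
    rfl
  intro i j
  set a := dotc (pder i ψ θstar) u with ha
  set b := dotc u (pder j ψ θstar) with hb
  set e := dotc (pder i ψ θstar) (pder j ψ θstar) with he
  have key : dotc (pder i ψps θstar) (pder j ψps θstar) -
        dotc (pder i ψps θstar) (ψps θstar) * dotc (ψps θstar) (pder j ψps θstar)
      = ((1 / t^2 : ℝ) : ℂ) * (e - a * b) := by
    rw [hpderps i, hpderps j, hw]
    simp only [dotc_add_left, dotc_add_right, dotc_rsmul_left, dotc_rsmul_right, hdKK, huu,
      ← ha, ← hb, ← he]
    push_cast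
    field_simp [htne]
    ring_nf
  simp only [uhlmann, ← hu, ← ha, ← hb, ← he, key]
  simp only [Complex.sub_im, Complex.mul_im, Complex.ofReal_re, Complex.ofReal_im]
  ring


end
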